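/- Let Ω be finite with target z and suppose O : Ω → ℝ≥0∞ satisfies O(z) = 0 and the ordering-based recursion: for each x with finite O-value and x ≠ z, letting L = {y : O(y) < O(x)}, one has P(x, L) > 0 and O(x) = (1 + Σ_{y∈L} P(x,y)O(y))/P(x,L). Then the Dijkstra-like procedure that initializes d_z = 0, d_x = ∞ otherwise, and repeatedly adds the state x* minimizing d over Ω∖T to T while updating d_x ← (1 + Σ_{y∈T} P(x,y)d_y)/P(x,T) for states x with P(x,T) > 0, terminates with d_x = O(x) for all x ∈ Ω. -/

import Mathlib

open scoped Classical

/-- One iteration of the Dijkstra-like procedure: if there is a state `x`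
outside `T` with finite `d`-value minimizing `d` over the complement of `T`,
add it to `T` and update `d_w ← (1 + Σ_{t∈T} P(w,t) d_t)/P(w,T)` for all states
`w ∉ T` with `P(w,T) > 0`; otherwise stop (do nothing). -/
noncomputable def dijkstraStep {Ω : Type*} [Fintype Ω] (P : Ω → Ω → ENNReal)
    (st : Finset Ω × (Ω → ENNReal)) : Finset Ω × (Ω → ENNReal) :=
  if h : ∃ x, x ∉ st.1 ∧ st.2 x ≠ ⊤ ∧ ∀ y, y ∉ st.1 → st.2 x ≤ st.2 y then
    let x := Classical.choose h
    let T' := insert x st.1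
    (T', fun w => if w ∉ T' ∧ 0 < ∑ t ∈ T', P w t
        then (1 + ∑ t ∈ T', P w t * st.2 t) / ∑ t ∈ T', P w t
        else st.2 w)
  else st

/-- The full run of the Dijkstra-like procedure: initialize `d_z = 0`,
`d_x = ∞` otherwise, `T = ∅`, and iterate the step `|Ω|` times. -/
noncomputable def dijkstraRun {Ω : Type*} [Fintype Ω]
    (P : Ω → Ω → ENNReal) (z : Ω) : Ω → ENNReal :=
  ((dijkstraStep P)^[Fintype.card Ω]
    (∅, fun x => if x = z then 0 else ⊤)).2

section Aux

variable {Ω : Type*} [Fintype Ω] (P : Ω → Ω → ENNReal) (z : Ω) (O : Ω → ENNReal)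

private lemma sumP_le_one (hrow : ∀ x, ∑ y, P x y = 1) (x : Ω) (S : Finset Ω) :
    ∑ t ∈ S, P x t ≤ 1 := by
  rw [← hrow x]; exact Finset.sum_le_sum_of_subset (Finset.subset_univ S)

private lemma sumP_ne_top (hrow : ∀ x, ∑ y, P x y = 1) (x : Ω) (S : Finset Ω) :
    ∑ t ∈ S, P x t ≠ ⊤ :=
  ne_top_of_le_ne_top ENNReal.one_ne_top (sumP_le_one P hrow x S)

/-- Core inequality: for any finite-O state `x ≠ z` and any finset `T`,
`O x * P(x,T) ≤ 1 + Σ_{t∈T} P(x,t) O(t)`. -/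
private lemma lemA (hrow : ∀ x, ∑ y, P x y = 1)
    (hrec : ∀ x, x ≠ z → O x ≠ ⊤ →
      0 < (∑ y ∈ Finset.univ.filter (fun y => O y < O x), P x y) ∧
      O x = (1 + ∑ y ∈ Finset.univ.filter (fun y => O y < O x), P x y * O y) /
        (∑ y ∈ Finset.univ.filter (fun y => O y < O x), P x y))
    (x : Ω) (hx : x ≠ z) (hfin : O x ≠ ⊤) (T : Finset Ω) :
    O x * ∑ t ∈ T, P x t ≤ 1 + ∑ t ∈ T, P x t * O t := by
  obtain ⟨ha, hOx⟩ := hrec x hx hfin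
  set L := Finset.univ.filter (fun y => O y < O x) with hLdef
  have hmul : O x * ∑ t ∈ L, P x t = 1 + ∑ t ∈ L, P x t * O t := by
    rw [hOx, mul_comm]
    exact ENNReal.mul_div_cancel ha.ne' (sumP_ne_top P hrow x L)
  have hTL : O x * ∑ t ∈ T \ L, P x t ≤ ∑ t ∈ T \ L, P x t * O t := by
    rw [Finset.mul_sum]
    refine Finset.sum_le_sum fun t ht => ?_
    rw [mul_comm]
    refine mul_le_mul_right ?_ _
    have h2 := (Finset.mem_sdiff.mp ht).2
    simp only [hLdef, Finset.mem_filter, Finset.mem_univ, true_and, not_lt] at h2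
    exact h2
  have hL2 : ∑ t ∈ L \ T, P x t * O t ≤ O x * ∑ t ∈ L \ T, P x t := by
    rw [Finset.mul_sum]
    refine Finset.sum_le_sum fun t ht => ?_
    rw [mul_comm (O x) _]
    refine mul_le_mul_right ?_ _
    have h2 := (Finset.mem_sdiff.mp ht).1
    simp only [hLdef, Finset.mem_filter, Finset.mem_univ, true_and] at h2
    exact h2.le
  have hsplitT : ∑ t ∈ T, P x t = ∑ t ∈ T ∩ L, P x t + ∑ t ∈ T \ L, P x t :=
    (Finset.sum_inter_add_sum_sdiff T L _).symm
  have hsplitTO : ∑ t ∈ T, P x t * O t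
      = ∑ t ∈ T ∩ L, P x t * O t + ∑ t ∈ T \ L, P x t * O t :=
    (Finset.sum_inter_add_sum_sdiff T L _).symm
  have hsplitL : ∑ t ∈ L, P x t = ∑ t ∈ L ∩ T, P x t + ∑ t ∈ L \ T, P x t :=
    (Finset.sum_inter_add_sum_sdiff L T _).symm
  have hsplitLO : ∑ t ∈ L, P x t * O t
      = ∑ t ∈ L ∩ T, P x t * O t + ∑ t ∈ L \ T, P x t * O t :=
    (Finset.sum_inter_add_sum_sdiff L T _).symm
  have hkey : O x * ∑ t ∈ L ∩ T, P x t ≤ 1 + ∑ t ∈ L ∩ T, P x t * O t := by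
    have h1 : O x * ∑ t ∈ L ∩ T, P x t + O x * ∑ t ∈ L \ T, P x t
        = (1 + ∑ t ∈ L ∩ T, P x t * O t) + ∑ t ∈ L \ T, P x t * O t := by
      rw [← mul_add, ← hsplitL, hmul, hsplitLO, ← add_assoc]
    have h2 : O x * ∑ t ∈ L ∩ T, P x t + O x * ∑ t ∈ L \ T, P x t
        ≤ (1 + ∑ t ∈ L ∩ T, P x t * O t) + O x * ∑ t ∈ L \ T, P x t := by
      rw [h1]; exact add_le_add_right hL2 _
    have hfin2 : O x * ∑ t ∈ L \ T, P x t ≠ ⊤ :=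
      ENNReal.mul_ne_top hfin (sumP_ne_top P hrow x _)
    exact (ENNReal.add_le_add_iff_right hfin2).mp h2
  rw [Finset.inter_comm] at hkey
  calc O x * ∑ t ∈ T, P x t
      = O x * ∑ t ∈ T ∩ L, P x t + O x * ∑ t ∈ T \ L, P x t := by
        rw [hsplitT, mul_add]
    _ ≤ (1 + ∑ t ∈ T ∩ L, P x t * O t) + ∑ t ∈ T \ L, P x t * O t :=
        add_le_add hkey hTL
    _ = 1 + ∑ t ∈ T, P x t * O t := by rw [hsplitTO, add_assoc]

/-- Equality case: if `T` contains `L = {O < O x}` and all elements of `T` have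
`O`-value at most `O x`, the Dijkstra update formula over `T` equals `O x`. -/
private lemma lemB (hrow : ∀ x, ∑ y, P x y = 1)
    (hrec : ∀ x, x ≠ z → O x ≠ ⊤ →
      0 < (∑ y ∈ Finset.univ.filter (fun y => O y < O x), P x y) ∧
      O x = (1 + ∑ y ∈ Finset.univ.filter (fun y => O y < O x), P x y * O y) /
        (∑ y ∈ Finset.univ.filter (fun y => O y < O x), P x y))
    (x : Ω) (hx : x ≠ z) (hfin : O x ≠ ⊤) (T : Finset Ω)
    (hsub : Finset.univ.filter (fun y => O y < O x) ⊆ T)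
    (hup : ∀ t ∈ T, O t ≤ O x) :
    (1 + ∑ t ∈ T, P x t * O t) / ∑ t ∈ T, P x t = O x := by
  obtain ⟨ha, hOx⟩ := hrec x hx hfin
  set L := Finset.univ.filter (fun y => O y < O x) with hLdef
  have hmul : O x * ∑ t ∈ L, P x t = 1 + ∑ t ∈ L, P x t * O t := by
    rw [hOx, mul_comm]
    exact ENNReal.mul_div_cancel ha.ne' (sumP_ne_top P hrow x L)
  have hPsplit : ∑ t ∈ T, P x t = ∑ t ∈ T \ L, P x t + ∑ t ∈ L, P x t :=
    (Finset.sum_sdiff hsub).symm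
  have hPOsplit : ∑ t ∈ T, P x t * O t
      = ∑ t ∈ T \ L, P x t * O t + ∑ t ∈ L, P x t * O t :=
    (Finset.sum_sdiff hsub).symm
  have hdiff : ∑ t ∈ T \ L, P x t * O t = O x * ∑ t ∈ T \ L, P x t := by
    rw [Finset.mul_sum]
    refine Finset.sum_congr rfl fun t ht => ?_
    have h1 := hup t (Finset.mem_sdiff.mp ht).1
    have h2 := (Finset.mem_sdiff.mp ht).2
    simp only [hLdef, Finset.mem_filter, Finset.mem_univ, true_and, not_lt] at h2
    rw [le_antisymm h1 h2, mul_comm]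
  have hnum : 1 + ∑ t ∈ T, P x t * O t = O x * ∑ t ∈ T, P x t := by
    rw [hPOsplit, hdiff, hPsplit, mul_add, hmul]
    ring
  have hTpos : (0 : ENNReal) < ∑ t ∈ T, P x t :=
    lt_of_lt_of_le ha (Finset.sum_le_sum_of_subset hsub)
  rw [hnum, mul_div_assoc, ENNReal.div_self hTpos.ne' (sumP_ne_top P hrow x T),
    mul_one]

/-- The Dijkstra invariant. -/
private def DInv (s : Finset Ω × (Ω → ENNReal)) : Prop :=
  z ∈ s.1 ∧ (∀ t ∈ s.1, s.2 t = O t) ∧ (∀ t ∈ s.1, O t ≠ ⊤) ∧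
  (∀ x, O x ≤ s.2 x) ∧ (∀ t ∈ s.1, ∀ y, y ∉ s.1 → O t ≤ O y) ∧
  (∀ x ∉ s.1, s.2 x = if 0 < ∑ t ∈ s.1, P x t
      then (1 + ∑ t ∈ s.1, P x t * O t) / ∑ t ∈ s.1, P x t else ⊤)

private lemma key_eq (hrow : ∀ x, ∑ y, P x y = 1)
    (hrec : ∀ x, x ≠ z → O x ≠ ⊤ →
      0 < (∑ y ∈ Finset.univ.filter (fun y => O y < O x), P x y) ∧
      O x = (1 + ∑ y ∈ Finset.univ.filter (fun y => O y < O x), P x y * O y) /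
        (∑ y ∈ Finset.univ.filter (fun y => O y < O x), P x y))
    (T : Finset Ω) (d : Ω → ENNReal) (hs : DInv P z O (T, d))
    (y : Ω) (hyT : y ∉ T) (hyz : y ≠ z) (hyfin : O y ≠ ⊤)
    (hsub : Finset.univ.filter (fun w => O w < O y) ⊆ T) :
    d y = O y := by
  obtain ⟨hzT, hdT, hfinT, hOd, hord, hform⟩ := hs
  have hpos : 0 < ∑ t ∈ T, P y t :=
    lt_of_lt_of_le (hrec y hyz hyfin).1 (Finset.sum_le_sum_of_subset hsub)
  have hy := hform y hyT
  rw [if_pos hpos] at hy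
  exact hy.trans (lemB P z O hrow hrec y hyz hyfin T hsub (fun t ht => hord t ht y hyT))

private lemma no_smaller (hrow : ∀ x, ∑ y, P x y = 1)
    (hrec : ∀ x, x ≠ z → O x ≠ ⊤ →
      0 < (∑ y ∈ Finset.univ.filter (fun y => O y < O x), P x y) ∧
      O x = (1 + ∑ y ∈ Finset.univ.filter (fun y => O y < O x), P x y * O y) /
        (∑ y ∈ Finset.univ.filter (fun y => O y < O x), P x y))
    (T : Finset Ω) (d : Ω → ENNReal) (hs : DInv P z O (T, d))
    (x : Ω) (hxT : x ∉ T) (hxfin : d x ≠ ⊤) (hxmin : ∀ y, y ∉ T → d x ≤ d y) :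
    ∀ y, y ∉ T → O x ≤ O y := by
  have hzT : z ∈ T := hs.1
  have hOd : ∀ w, O w ≤ d w := hs.2.2.2.1
  by_contra hcon
  push_neg at hcon
  obtain ⟨y0, hy0T, hy0⟩ := hcon
  have hne : (Finset.univ.filter (fun y => y ∉ T ∧ O y < O x)).Nonempty :=
    ⟨y0, Finset.mem_filter.mpr ⟨Finset.mem_univ _, hy0T, hy0⟩⟩
  obtain ⟨y1, hy1mem, hy1min⟩ := Finset.exists_min_image _ O hne
  simp only [Finset.mem_filter, Finset.mem_univ, true_and] at hy1mem
  obtain ⟨hy1T, hy1lt⟩ := hy1mem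
  have hy1z : y1 ≠ z := fun h => hy1T (h ▸ hzT)
  have hOxfin : O x ≠ ⊤ := fun h => hxfin (top_le_iff.mp (h ▸ hOd x))
  have hy1fin : O y1 ≠ ⊤ := (hy1lt.trans hOxfin.lt_top).ne
  have hsub : Finset.univ.filter (fun w => O w < O y1) ⊆ T := by
    intro w hw
    simp only [Finset.mem_filter, Finset.mem_univ, true_and] at hw
    by_contra hwT
    have hle : O y1 ≤ O w :=
      hy1min w (Finset.mem_filter.mpr ⟨Finset.mem_univ _, hwT, hw.trans hy1lt⟩)
    exact absurd hw (not_lt.mpr hle)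
  have hdy1 : d y1 = O y1 := key_eq P z O hrow hrec T d hs y1 hy1T hy1z hy1fin hsub
  have h1 : d x ≤ O y1 := hdy1 ▸ hxmin y1 hy1T
  exact absurd ((hOd x).trans h1) (not_le.mpr hy1lt)

private lemma exists_witness (hrow : ∀ x, ∑ y, P x y = 1)
    (hrec : ∀ x, x ≠ z → O x ≠ ⊤ →
      0 < (∑ y ∈ Finset.univ.filter (fun y => O y < O x), P x y) ∧
      O x = (1 + ∑ y ∈ Finset.univ.filter (fun y => O y < O x), P x y * O y) /
        (∑ y ∈ Finset.univ.filter (fun y => O y < O x), P x y))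
    (T : Finset Ω) (d : Ω → ENNReal) (hs : DInv P z O (T, d))
    (hex : ∃ x, x ∉ T ∧ O x ≠ ⊤) :
    ∃ x, x ∉ T ∧ d x ≠ ⊤ ∧ ∀ y, y ∉ T → d x ≤ d y := by
  obtain ⟨x0, hx0T, hx0fin⟩ := hex
  have hzT : z ∈ T := hs.1
  have hne : (Finset.univ.filter (fun y => y ∉ T ∧ O y ≠ ⊤)).Nonempty :=
    ⟨x0, Finset.mem_filter.mpr ⟨Finset.mem_univ _, hx0T, hx0fin⟩⟩
  obtain ⟨x1, hx1mem, hx1min⟩ := Finset.exists_min_image _ O hne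
  simp only [Finset.mem_filter, Finset.mem_univ, true_and] at hx1mem
  obtain ⟨hx1T, hx1fin⟩ := hx1mem
  have hx1z : x1 ≠ z := fun h => hx1T (h ▸ hzT)
  have hsub : Finset.univ.filter (fun w => O w < O x1) ⊆ T := by
    intro w hw
    simp only [Finset.mem_filter, Finset.mem_univ, true_and] at hw
    by_contra hwT
    have hle : O x1 ≤ O w :=
      hx1min w (Finset.mem_filter.mpr ⟨Finset.mem_univ _, hwT, hw.ne_top⟩)
    exact absurd hw (not_lt.mpr hle)
  have hdx1 : d x1 = O x1 := key_eq P z O hrow hrec T d hs x1 hx1T hx1z hx1fin hsub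
  have hne2 : (Finset.univ.filter (fun y => y ∉ T)).Nonempty :=
    ⟨x1, Finset.mem_filter.mpr ⟨Finset.mem_univ _, hx1T⟩⟩
  obtain ⟨xs, hxsmem, hxsmin⟩ := Finset.exists_min_image _ d hne2
  simp only [Finset.mem_filter, Finset.mem_univ, true_and] at hxsmem
  have hle : d xs ≤ d x1 :=
    hxsmin x1 (Finset.mem_filter.mpr ⟨Finset.mem_univ _, hx1T⟩)
  refine ⟨xs, hxsmem, ?_, fun y hy => hxsmin y (Finset.mem_filter.mpr ⟨Finset.mem_univ _, hy⟩)⟩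
  rw [hdx1] at hle
  exact ne_top_of_le_ne_top hx1fin hle

private lemma step_inv (hrow : ∀ x, ∑ y, P x y = 1) (hz : O z = 0)
    (hrec : ∀ x, x ≠ z → O x ≠ ⊤ →
      0 < (∑ y ∈ Finset.univ.filter (fun y => O y < O x), P x y) ∧
      O x = (1 + ∑ y ∈ Finset.univ.filter (fun y => O y < O x), P x y * O y) /
        (∑ y ∈ Finset.univ.filter (fun y => O y < O x), P x y))
    (hinf : ∀ x, O x = ⊤ → ∀ y, 0 < P x y → O y = ⊤)
    (s : Finset Ω × (Ω → ENNReal)) (hs : DInv P z O s) :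
    DInv P z O (dijkstraStep P s) ∧ s.1 ⊆ (dijkstraStep P s).1 ∧
      ((∃ x, x ∉ s.1 ∧ O x ≠ ⊤) → s.1.card + 1 ≤ (dijkstraStep P s).1.card) := by
  obtain ⟨T, d⟩ := s
  by_cases h : ∃ x, x ∉ (T, d).1 ∧ (T, d).2 x ≠ ⊤ ∧
      ∀ y, y ∉ (T, d).1 → (T, d).2 x ≤ (T, d).2 y
  · obtain ⟨hxT, hxfin, hxmin⟩ := Classical.choose_spec h
    set xs := Classical.choose h with hxdef
    have hxT : xs ∉ T := hxT
    have hxfin : d xs ≠ ⊤ := hxfin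
    have hxmin : ∀ y, y ∉ T → d xs ≤ d y := hxmin
    obtain ⟨hzT, hdT, hfinT, hOd, hord, hform⟩ := hs
    have hzT : z ∈ T := hzT
    have hdT : ∀ t ∈ T, d t = O t := hdT
    have hfinT : ∀ t ∈ T, O t ≠ ⊤ := hfinT
    have hOd : ∀ w, O w ≤ d w := hOd
    have hord : ∀ t ∈ T, ∀ y, y ∉ T → O t ≤ O y := hord
    have hform : ∀ x ∉ T, d x = if 0 < ∑ t ∈ T, P x t
        then (1 + ∑ t ∈ T, P x t * O t) / ∑ t ∈ T, P x t else ⊤ := hform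
    have hsfull : DInv P z O (T, d) := ⟨hzT, hdT, hfinT, hOd, hord, hform⟩
    have hxz : xs ≠ z := fun hh => hxT (hh ▸ hzT)
    have hOxfin : O xs ≠ ⊤ := fun hh => hxfin (top_le_iff.mp (hh ▸ hOd xs))
    have hmin : ∀ y, y ∉ T → O xs ≤ O y :=
      no_smaller P z O hrow hrec T d hsfull xs hxT hxfin hxmin
    have hsub : Finset.univ.filter (fun w => O w < O xs) ⊆ T := by
      intro w hw
      simp only [Finset.mem_filter, Finset.mem_univ, true_and] at hw
      by_contra hwT
      exact absurd hw (not_lt.mpr (hmin w hwT))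
    have hdxs : d xs = O xs :=
      key_eq P z O hrow hrec T d hsfull xs hxT hxz hOxfin hsub
    have hstep : dijkstraStep P (T, d)
        = (insert xs T, fun w => if w ∉ insert xs T ∧ 0 < ∑ t ∈ insert xs T, P w t
            then (1 + ∑ t ∈ insert xs T, P w t * d t) / ∑ t ∈ insert xs T, P w t
            else d w) := by
      rw [dijkstraStep, dif_pos h]
    rw [hstep]
    have hdT' : ∀ t ∈ insert xs T, d t = O t := by
      intro t ht
      rcases Finset.mem_insert.mp ht with h1 | h1
      · rw [h1, hdxs]
      · exact hdT t h1
    have hfinT' : ∀ t ∈ insert xs T, O t ≠ ⊤ := by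
      intro t ht
      rcases Finset.mem_insert.mp ht with h1 | h1
      · rw [h1]; exact hOxfin
      · exact hfinT t h1
    have hordT' : ∀ t ∈ insert xs T, ∀ y, y ∉ insert xs T → O t ≤ O y := by
      intro t ht y hy
      have hyT : y ∉ T := fun hh => hy (Finset.mem_insert_of_mem hh)
      rcases Finset.mem_insert.mp ht with h1 | h1
      · rw [h1]; exact hmin y hyT
      · exact hord t h1 y hyT
    have hsum_congr : ∀ w, ∑ t ∈ insert xs T, P w t * d t
        = ∑ t ∈ insert xs T, P w t * O t :=
      fun w => Finset.sum_congr rfl fun t ht => by rw [hdT' t ht]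
    refine ⟨⟨Finset.mem_insert_of_mem hzT, ?_, hfinT', ?_, hordT', ?_⟩,
      Finset.subset_insert xs T, fun _ => ?_⟩
    · -- d' = O on insert xs T
      intro t ht
      simp only
      rw [if_neg (fun hc => hc.1 ht)]
      exact hdT' t ht
    · -- O ≤ d' everywhere
      intro w
      simp only
      by_cases hw : w ∈ insert xs T
      · rw [if_neg (fun hc => hc.1 hw), hdT' w hw]
      · by_cases hcond : 0 < ∑ t ∈ insert xs T, P w t
        · rw [if_pos ⟨hw, hcond⟩, hsum_congr]
          by_cases hOw : O w = ⊤
          · exfalso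
            have hzero : ∑ t ∈ insert xs T, P w t = 0 :=
              Finset.sum_eq_zero fun t ht => by
                by_contra hP
                exact hfinT' t ht (hinf w hOw t (pos_iff_ne_zero.mpr hP))
            rw [hzero] at hcond
            exact lt_irrefl 0 hcond
          · have hwz : w ≠ z := fun hh => hw (hh ▸ Finset.mem_insert_of_mem hzT)
            exact (ENNReal.le_div_iff_mul_le (Or.inl hcond.ne')
              (Or.inl (sumP_ne_top P hrow w _))).mpr
              (lemA P z O hrow hrec w hwz hOw _)
        · rw [if_neg (fun hc => hcond hc.2)]
          exact hOd w
    · -- formula for states outside insert xs T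
      intro w hw
      simp only
      by_cases hcond : 0 < ∑ t ∈ insert xs T, P w t
      · rw [if_pos ⟨hw, hcond⟩, if_pos hcond, hsum_congr]
      · rw [if_neg (fun hc => hcond hc.2), if_neg hcond]
        have hwT : w ∉ T := fun hh => hw (Finset.mem_insert_of_mem hh)
        have h0 : ¬ 0 < ∑ t ∈ T, P w t := fun hp => hcond
          (lt_of_lt_of_le hp
            (Finset.sum_le_sum_of_subset (Finset.subset_insert xs T)))
        have hfw := hform w hwT
        rw [if_neg h0] at hfw
        exact hfw
    · -- card increases
      simp only
      rw [Finset.card_insert_of_notMem hxT]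
  · have hstep : dijkstraStep P (T, d) = (T, d) := by
      rw [dijkstraStep, dif_neg h]
    rw [hstep]
    exact ⟨hs, Finset.Subset.refl T,
      fun hex => absurd (exists_witness P z O hrow hrec T d hs hex) h⟩

private lemma base_inv (hrow : ∀ x, ∑ y, P x y = 1) (hz : O z = 0)
    (hrec : ∀ x, x ≠ z → O x ≠ ⊤ →
      0 < (∑ y ∈ Finset.univ.filter (fun y => O y < O x), P x y) ∧
      O x = (1 + ∑ y ∈ Finset.univ.filter (fun y => O y < O x), P x y * O y) /
        (∑ y ∈ Finset.univ.filter (fun y => O y < O x), P x y))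
    (hinf : ∀ x, O x = ⊤ → ∀ y, 0 < P x y → O y = ⊤) :
    DInv P z O (dijkstraStep P (∅, fun x => if x = z then (0:ENNReal) else ⊤)) := by
  have h : ∃ x, x ∉ ((∅ : Finset Ω), fun x => if x = z then (0:ENNReal) else ⊤).1 ∧
      ((∅ : Finset Ω), fun x => if x = z then (0:ENNReal) else ⊤).2 x ≠ ⊤ ∧
      ∀ y, y ∉ ((∅ : Finset Ω), fun x => if x = z then (0:ENNReal) else ⊤).1 →
        ((∅ : Finset Ω), fun x => if x = z then (0:ENNReal) else ⊤).2 x ≤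
        ((∅ : Finset Ω), fun x => if x = z then (0:ENNReal) else ⊤).2 y := by
    refine ⟨z, Finset.notMem_empty z, ?_, fun y _ => ?_⟩ <;> simp
  have hxz : Classical.choose h = z := by
    obtain ⟨-, h2, -⟩ := Classical.choose_spec h
    by_contra hne
    simp only [if_neg hne] at h2
    exact h2 rfl
  have hstep : dijkstraStep P (∅, fun x => if x = z then (0:ENNReal) else ⊤)
      = (insert z (∅ : Finset Ω),
        fun w => if w ∉ insert z (∅ : Finset Ω) ∧ 0 < ∑ t ∈ insert z (∅ : Finset Ω), P w t
          then (1 + ∑ t ∈ insert z (∅ : Finset Ω), P w t * (if t = z then (0:ENNReal) else ⊤)) /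
            ∑ t ∈ insert z (∅ : Finset Ω), P w t
          else if w = z then (0:ENNReal) else ⊤) := by
    rw [dijkstraStep, dif_pos h, hxz]
  rw [hstep]
  set T0 := insert z (∅ : Finset Ω) with hT0
  have hmemT0 : ∀ t, t ∈ T0 → t = z := by
    intro t ht
    rcases Finset.mem_insert.mp ht with h1 | h1
    · exact h1
    · exact absurd h1 (Finset.notMem_empty t)
  have hsum : ∀ f : Ω → ENNReal, ∑ t ∈ T0, f t = f z := fun f => by
    rw [hT0, Finset.sum_insert (Finset.notMem_empty z), Finset.sum_empty, add_zero]
  have hcong : ∀ w, ∑ t ∈ T0, P w t * (if t = z then (0:ENNReal) else ⊤)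
      = ∑ t ∈ T0, P w t * O t := by
    intro w
    refine Finset.sum_congr rfl fun t ht => ?_
    rw [hmemT0 t ht, if_pos rfl, hz]
  have hd'T : ∀ t ∈ T0, (if t ∉ T0 ∧ 0 < ∑ s ∈ T0, P t s
      then (1 + ∑ s ∈ T0, P t s * (if s = z then (0:ENNReal) else ⊤)) / ∑ s ∈ T0, P t s
      else if t = z then (0:ENNReal) else ⊤) = O t := by
    intro t ht
    rw [if_neg (fun hc => hc.1 ht), if_pos (hmemT0 t ht), hmemT0 t ht, hz]
  refine ⟨Finset.mem_insert_self z ∅, ?_, ?_, ?_, ?_, ?_⟩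
  · exact hd'T
  · intro t ht
    rw [hmemT0 t ht, hz]
    exact ENNReal.zero_ne_top
  · -- O ≤ d'
    intro w
    simp only
    by_cases hw : w ∈ T0
    · rw [hd'T w hw]
    · by_cases hcond : 0 < ∑ t ∈ T0, P w t
      · rw [if_pos ⟨hw, hcond⟩, hcong]
        have hwz : w ≠ z := fun hh => hw (by rw [hh]; exact Finset.mem_insert_self z ∅)
        have hOw : O w ≠ ⊤ := by
          intro hOw
          have hPz : 0 < P w z := by
            rw [hsum (P w)] at hcond
            exact hcond
          exact ENNReal.zero_ne_top (hz ▸ hinf w hOw z hPz)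
        exact (ENNReal.le_div_iff_mul_le (Or.inl hcond.ne')
          (Or.inl (sumP_ne_top P hrow w _))).mpr
          (lemA P z O hrow hrec w hwz hOw _)
      · rw [if_neg (fun hc => hcond hc.2)]
        have hwz : w ≠ z := fun hh => hw (by rw [hh]; exact Finset.mem_insert_self z ∅)
        rw [if_neg hwz]
        exact le_top
  · intro t ht y _
    rw [hmemT0 t ht, hz]
    exact zero_le
  · intro w hw
    simp only
    by_cases hcond : 0 < ∑ t ∈ T0, P w t
    · rw [if_pos ⟨hw, hcond⟩, if_pos hcond, hcong]
    · rw [if_neg (fun hc => hcond hc.2), if_neg hcond]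
      have hwz : w ≠ z := fun hh => hw (by rw [hh]; exact Finset.mem_insert_self z ∅)
      rw [if_neg hwz]

end Aux

/-- The Dijkstra-like procedure terminates with `d_x = O(x)` for
every state `x`, where `O` is the optimal rewinding hitting time of `z`,
characterized by `O(z) = 0` and, for `x ≠ z` with finite value and
`L = {y : O(y) < O(x)}`, by `P(x,L) > 0` and
`O(x) = (1 + Σ_{y∈L} P(x,y)O(y))/P(x,L)`; states with no positive-probability
path to `z` have `O(x) = ∞`. -/
theorem stmt15 {Ω : Type*} [Fintype Ω]
    (P : Ω → Ω → ENNReal) (hrow : ∀ x, ∑ y, P x y = 1)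
    (z : Ω) (O : Ω → ENNReal) (hz : O z = 0)
    (hrec : ∀ x, x ≠ z → O x ≠ ⊤ →
      0 < (∑ y ∈ Finset.univ.filter (fun y => O y < O x), P x y) ∧
      O x = (1 + ∑ y ∈ Finset.univ.filter (fun y => O y < O x), P x y * O y) /
        (∑ y ∈ Finset.univ.filter (fun y => O y < O x), P x y))
    (hinf : ∀ x, O x = ⊤ → ∀ y, 0 < P x y → O y = ⊤) :
    ∀ x, dijkstraRun P z x = O x := by
  have hcard : 1 ≤ Fintype.card Ω := Fintype.card_pos_iff.mpr ⟨z⟩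
  have main : ∀ k, 1 ≤ k →
      DInv P z O ((dijkstraStep P)^[k] (∅, fun x => if x = z then (0:ENNReal) else ⊤)) ∧
      ((∀ y, O y ≠ ⊤ → y ∈ ((dijkstraStep P)^[k] (∅, fun x => if x = z then (0:ENNReal) else ⊤)).1) ∨
        k ≤ ((dijkstraStep P)^[k] (∅, fun x => if x = z then (0:ENNReal) else ⊤)).1.card) := by
    intro k hk
    induction k with
    | zero => omega
    | succ n ih =>
      by_cases hn0 : n = 0
      · subst hn0
        simp only [zero_add, Function.iterate_one]
        have hb := base_inv P z O hrow hz hrec hinf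
        exact ⟨hb, Or.inr (Finset.card_pos.mpr ⟨z, hb.1⟩)⟩
      · have hn1 : 1 ≤ n := by omega
        obtain ⟨ihInv, ihProg⟩ := ih hn1
        rw [Function.iterate_succ_apply']
        obtain ⟨hInv', hsub', hprog'⟩ :=
          step_inv P z O hrow hz hrec hinf _ ihInv
        refine ⟨hInv', ?_⟩
        rcases ihProg with hall | hcd
        · exact Or.inl fun y hy => hsub' (hall y hy)
        · by_cases hall2 : ∀ y, O y ≠ ⊤ →
              y ∈ ((dijkstraStep P)^[n] (∅, fun x => if x = z then (0:ENNReal) else ⊤)).1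
          · exact Or.inl fun y hy => hsub' (hall2 y hy)
          · right
            push_neg at hall2
            obtain ⟨y, hy1, hy2⟩ := hall2
            have hstep := hprog' ⟨y, hy2, hy1⟩
            omega
  obtain ⟨hInv, hprog⟩ := main (Fintype.card Ω) hcard
  set sN := (dijkstraStep P)^[Fintype.card Ω] (∅, fun x => if x = z then (0:ENNReal) else ⊤) with hsN
  have hallfin : ∀ y, O y ≠ ⊤ → y ∈ sN.1 := by
    rcases hprog with h | h
    · exact h
    · have huniv : sN.1 = Finset.univ :=
        Finset.eq_univ_of_card _ (le_antisymm (Finset.card_le_univ _) h)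
      intro y _
      rw [huniv]
      exact Finset.mem_univ y
  intro x
  have hrun : dijkstraRun P z x = sN.2 x := rfl
  rw [hrun]
  by_cases hx : x ∈ sN.1
  · exact hInv.2.1 x hx
  · have hOx : O x = ⊤ := not_not.mp (fun h => hx (hallfin x h))
    have h1 : O x ≤ sN.2 x := hInv.2.2.2.1 x
    rw [hOx] at h1
    rw [hOx]
    exact top_le_iff.mp h1
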